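/- Let k be a field of characteristic different from 2. Let R = k[x,y], R^{S₂} ⊆ R the subalgebra of symmetric polynomials, and B = R ⊗_{R^{S₂}} R. Then the map ψ : B ⊕ B → R ⊗_{R^{S₂}} R ⊗_{R^{S₂}} R determined by ψ(f⊗g, h⊗l) = f⊗1⊗g + h⊗(y−x)⊗l is a well-defined isomorphism of (R,R)-bimodules (where R acts on the left via the first tensor factor and on the right via the last tensor factor). In particular B ⊗_R B ≅ B ⊕ B as (R,R)-bimodules. -/

import Mathlib

set_option synthInstance.maxHeartbeats 1000000
set_option maxHeartbeats 4000000

open MvPolynomial TensorProduct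

/-- `R = k[x,y]` (`x = X 0`, `y = X 1`). -/
noncomputable abbrev stmt10R (k : Type) [Field k] := MvPolynomial (Fin 2) k

/-- `R^{S₂}`, the subalgebra of symmetric polynomials. -/
noncomputable abbrev stmt10S (k : Type) [Field k] : Subalgebra k (stmt10R k) :=
  MvPolynomial.symmetricSubalgebra (Fin 2) k

/-- The Soergel bimodule `B = R ⊗_{R^{S₂}} R`. -/
noncomputable abbrev stmt10B (k : Type) [Field k] :=
  (stmt10R k) ⊗[↥(stmt10S k)] (stmt10R k)

/-- The triple tensor product `R ⊗_{R^{S₂}} R ⊗_{R^{S₂}} R`,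
realized as `(R ⊗_{R^{S₂}} R) ⊗_{R^{S₂}} R`; this is the canonical identification of
`B ⊗_R B`. -/
noncomputable abbrev stmt10T (k : Type) [Field k] :=
  (stmt10B k) ⊗[↥(stmt10S k)] (stmt10R k)

noncomputable instance (k : Type) [Field k] : CommRing (stmt10T k) :=
  @Algebra.TensorProduct.instCommRing (↥(stmt10S k)) (stmt10B k) (stmt10R k) _ _ _ _ _

noncomputable instance (k : Type) [Field k] : Algebra k (stmt10T k) :=
  @Algebra.TensorProduct.leftAlgebra (↥(stmt10S k)) k (stmt10B k) (stmt10R k)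
    _ _ _ _ _ _ _ _



noncomputable def swA (k : Type) [Field k] : MvPolynomial (Fin 2) k →ₐ[k] MvPolynomial (Fin 2) k :=
  MvPolynomial.rename (Equiv.swap 0 1)

lemma swA_swA (k : Type) [Field k] (p : MvPolynomial (Fin 2) k) : swA k (swA k p) = p := by
  simp only [swA, rename_rename, Function.comp_def, Equiv.swap_apply_self]
  exact rename_id_apply p

lemma perm2 (e : Equiv.Perm (Fin 2)) : e = 1 ∨ e = Equiv.swap (0:Fin 2) 1 := by revert e; decide

lemma sym_of_sw (k : Type) [Field k] (p : MvPolynomial (Fin 2) k) (h : swA k p = p) :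
    p ∈ MvPolynomial.symmetricSubalgebra (Fin 2) k := by
  rw [mem_symmetricSubalgebra]
  intro e
  rcases perm2 e with he | he <;> subst he
  · exact rename_id_apply p
  · exact h

lemma sw_of_mem (k : Type) [Field k] (p : MvPolynomial (Fin 2) k)
    (h : p ∈ MvPolynomial.symmetricSubalgebra (Fin 2) k) : swA k p = p := by
  rw [mem_symmetricSubalgebra] at h
  exact h (Equiv.swap 0 1)

-- diagonal: x ↦ x, y ↦ x
noncomputable def dgA (k : Type) [Field k] : MvPolynomial (Fin 2) k →ₐ[k] MvPolynomial (Fin 2) k :=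
  MvPolynomial.aeval (fun _ => X 0)

lemma dvd_sub_dg (k : Type) [Field k] (p : MvPolynomial (Fin 2) k) :
    (X 1 - X 0 : MvPolynomial (Fin 2) k) ∣ (p - dgA k p) := by
  induction p using MvPolynomial.induction_on with
  | C a => simp [dgA]
  | add p q hp hq =>
    have : p + q - dgA k (p + q) = (p - dgA k p) + (q - dgA k q) := by
      rw [map_add]; ring
    rw [this]; exact dvd_add hp hq
  | mul_X p i hp =>
    have : p * X i - dgA k (p * X i) = (p - dgA k p) * X i + dgA k p * (X i - dgA k (X i)) := by
      rw [map_mul]; ring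
    rw [this]
    refine dvd_add (Dvd.dvd.mul_right hp _) (Dvd.dvd.mul_left ?_ _)
    fin_cases i
    · simp [dgA]
    · simp [dgA]

lemma dg_sw (k : Type) [Field k] (p : MvPolynomial (Fin 2) k) : dgA k (swA k p) = dgA k p := by
  have : (dgA k).comp (swA k) = dgA k := by
    apply MvPolynomial.algHom_ext
    intro i
    fin_cases i <;> simp [dgA, swA]
  calc dgA k (swA k p) = ((dgA k).comp (swA k)) p := rfl
    _ = dgA k p := by rw [this]

lemma delta_ne (k : Type) [Field k] : (X 1 - X 0 : MvPolynomial (Fin 2) k) ≠ 0 := by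
  intro h
  have := congrArg (MvPolynomial.coeff (Finsupp.single 1 1)) h
  simp [coeff_X', Finsupp.single_eq_single_iff] at this

lemma dvd_antisym' (k : Type) [Field k] (p : MvPolynomial (Fin 2) k) :
    (X 1 - X 0 : MvPolynomial (Fin 2) k) ∣ (p - swA k p) := by
  have h1 := dvd_sub_dg k p
  have h2 := dvd_sub_dg k (swA k p)
  rw [dg_sw] at h2
  have := dvd_sub h1 h2
  simpa using this

/-- `c p` : the symmetric quotient, `p - sw p = c p * (y - x)`. -/
noncomputable def cq (k : Type) [Field k] (p : MvPolynomial (Fin 2) k) : MvPolynomial (Fin 2) k :=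
  (dvd_antisym' k p).choose

lemma cq_spec (k : Type) [Field k] (p : MvPolynomial (Fin 2) k) :
    p - swA k p = (X 1 - X 0) * cq k p := (dvd_antisym' k p).choose_spec

lemma cq_unique (k : Type) [Field k] (p q : MvPolynomial (Fin 2) k)
    (h : p - swA k p = (X 1 - X 0) * q) : q = cq k p := by
  have := (cq_spec k p).symm.trans h
  exact (mul_left_cancel₀ (delta_ne k) this).symm

lemma sw_delta (k : Type) [Field k] :
    swA k (X 1 - X 0 : MvPolynomial (Fin 2) k) = -(X 1 - X 0) := by
  simp [swA]

lemma cq_sym (k : Type) [Field k] (p : MvPolynomial (Fin 2) k) : swA k (cq k p) = cq k p := by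
  apply mul_left_cancel₀ (delta_ne k)
  have h1 : swA k (p - swA k p) = -((X 1 - X 0) * cq k p) := by
    rw [map_sub, swA_swA, ← neg_sub, ← cq_spec]
  have h2 : swA k (p - swA k p) = swA k (X 1 - X 0) * swA k (cq k p) := by
    rw [cq_spec, map_mul]
  rw [h1, sw_delta] at h2
  rw [neg_mul] at h2
  exact (neg_injective h2).symm

lemma cq_add (k : Type) [Field k] (p q : MvPolynomial (Fin 2) k) :
    cq k (p + q) = cq k p + cq k q := by
  refine (cq_unique k _ _ ?_).symm
  rw [map_add, mul_add, ← cq_spec, ← cq_spec]; ring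

lemma cq_mul_sym (k : Type) [Field k] (s p : MvPolynomial (Fin 2) k) (hs : swA k s = s) :
    cq k (s * p) = s * cq k p := by
  refine (cq_unique k _ _ ?_).symm
  rw [map_mul, hs, mul_left_comm, ← cq_spec]; ring

-- insertion map B →ₗ[S] T,  f ⊗ g ↦ (f ⊗ m) ⊗ g
noncomputable def ins (k : Type) [Field k] (m : stmt10R k) : stmt10B k →ₗ[↥(stmt10S k)] stmt10T k :=
  TensorProduct.lift
  { toFun := fun f => TensorProduct.mk (↥(stmt10S k)) (stmt10B k) (stmt10R k) (f ⊗ₜ m)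
    map_add' := by intro a b; ext g; simp [add_tmul]; rfl
    map_smul' := by intro s a; ext g; simp [smul_tmul']; rfl }

lemma ins_tmul (k : Type) [Field k] (m f g : stmt10R k) :
    ins k m (f ⊗ₜ g) = (f ⊗ₜ[↥(stmt10S k)] m) ⊗ₜ[↥(stmt10S k)] g := rfl

-- ψ as k-linear map
noncomputable def psi (k : Type) [Field k] : (stmt10B k × stmt10B k) →ₗ[k] stmt10T k :=
  LinearMap.coprod ((ins k 1).restrictScalars k) ((ins k (X 1 - X 0)).restrictScalars k)

noncomputable def aval (k : Type) [Field k] (p : stmt10R k) : stmt10R k :=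
  C (2⁻¹ : k) * (p + swA k p)
noncomputable def bval (k : Type) [Field k] (p : stmt10R k) : stmt10R k :=
  C (2⁻¹ : k) * cq k p

lemma sw_aval (k : Type) [Field k] (p : stmt10R k) : swA k (aval k p) = aval k p := by
  simp only [aval, map_mul, map_add, swA_swA]
  rw [show swA k (C (2⁻¹:k)) = C (2⁻¹:k) from by simp [swA]]
  ring
lemma sw_bval (k : Type) [Field k] (p : stmt10R k) : swA k (bval k p) = bval k p := by
  simp only [bval, map_mul, cq_sym]
  rw [show swA k (C (2⁻¹:k)) = C (2⁻¹:k) from by simp [swA]]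

lemma two_R (k : Type) [Field k] : (C (2:k) : stmt10R k) = 2 := by
  exact map_ofNat C 2

lemma recon (k : Type) [Field k] (hchar : (2:k) ≠ 0) (p : stmt10R k) :
    aval k p + bval k p * (X 1 - X 0) = p := by
  have h := cq_spec k p
  have : aval k p + bval k p * (X 1 - X 0)
      = C (2⁻¹:k) * ((p + swA k p) + (p - swA k p)) := by
    rw [aval, bval, h]; ring
  rw [this]
  have : (p + swA k p) + (p - swA k p) = C (2:k) * p := by rw [two_R]; ring
  rw [this, ← mul_assoc, ← map_mul, inv_mul_cancel₀ hchar]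
  simp

lemma aval_one (k : Type) [Field k] (hchar : (2:k) ≠ 0) : aval k 1 = 1 := by
  rw [aval, map_one, show (1:stmt10R k) + 1 = C (2:k) from by rw [two_R]; ring,
    ← map_mul, inv_mul_cancel₀ hchar, map_one]
lemma bval_one (k : Type) [Field k] : bval k 1 = 0 := by
  have : (0 : stmt10R k) = cq k 1 := cq_unique k 1 0 (by simp)
  rw [bval, ← this, mul_zero]
lemma aval_delta (k : Type) [Field k] : aval k (X 1 - X 0) = 0 := by
  rw [aval, sw_delta]; ring
lemma bval_delta (k : Type) [Field k] (hchar : (2:k) ≠ 0) : bval k (X 1 - X 0) = 1 := by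
  have : (C (2:k) : stmt10R k) = cq k (X 1 - X 0) := by
    apply cq_unique
    rw [sw_delta, two_R]; ring
  rw [bval, ← this, ← map_mul, inv_mul_cancel₀ hchar, map_one]

lemma aval_add (k : Type) [Field k] (p q : stmt10R k) :
    aval k (p + q) = aval k p + aval k q := by
  simp only [aval, map_add]; ring
lemma bval_add (k : Type) [Field k] (p q : stmt10R k) :
    bval k (p + q) = bval k p + bval k q := by
  simp only [bval, cq_add]; ring
lemma aval_mul_sym (k : Type) [Field k] (s p : stmt10R k) (hs : swA k s = s) :
    aval k (s * p) = s * aval k p := by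
  simp only [aval, map_mul, hs]; ring
lemma bval_mul_sym (k : Type) [Field k] (s p : stmt10R k) (hs : swA k s = s) :
    bval k (s * p) = s * bval k p := by
  simp only [bval, cq_mul_sym k s p hs]; ring

-- bundled S-valued S-linear maps
noncomputable def Am (k : Type) [Field k] : stmt10R k →ₗ[↥(stmt10S k)] ↥(stmt10S k) where
  toFun p := ⟨aval k p, sym_of_sw k _ (sw_aval k p)⟩
  map_add' p q := Subtype.ext (aval_add k p q)
  map_smul' s p := Subtype.ext (by
    simpa [Subalgebra.smul_def] using aval_mul_sym k (s:stmt10R k) p (sw_of_mem k _ s.2))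

noncomputable def Bm (k : Type) [Field k] : stmt10R k →ₗ[↥(stmt10S k)] ↥(stmt10S k) where
  toFun p := ⟨bval k p, sym_of_sw k _ (sw_bval k p)⟩
  map_add' p q := Subtype.ext (bval_add k p q)
  map_smul' s p := Subtype.ext (by
    simpa [Subalgebra.smul_def] using bval_mul_sym k (s:stmt10R k) p (sw_of_mem k _ s.2))

-- the inverse map
noncomputable def invI (k : Type) [Field k] :
    stmt10R k →ₗ[↥(stmt10S k)] stmt10R k →ₗ[↥(stmt10S k)]
      stmt10R k →ₗ[↥(stmt10S k)] (stmt10B k × stmt10B k) where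
  toFun f :=
    { toFun := fun r => LinearMap.prod
        (TensorProduct.mk (↥(stmt10S k)) (stmt10R k) (stmt10R k) ((Am k r) • f))
        (TensorProduct.mk (↥(stmt10S k)) (stmt10R k) (stmt10R k) ((Bm k r) • f))
      map_add' := by
        intro r r'
        ext g <;> simp [add_smul, add_tmul] <;> rfl
      map_smul' := by
        intro s r
        ext g <;> simp [mul_smul, smul_tmul'] <;> rfl }
  map_add' := by
    intro f f'
    ext r g <;> simp [smul_add, add_tmul] <;> rfl
  map_smul' := by
    intro s f
    ext r g <;> simp [smul_tmul', smul_comm s] <;> erw [LinearMap.prod_apply, LinearMap.prod_apply] <;> simp [smul_tmul', smul_comm s] <;> erw [LinearMap.smul_apply, LinearMap.smul_apply, LinearMap.smul_apply, smul_comm] <;> rfl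

noncomputable def invT (k : Type) [Field k] :
    stmt10T k →ₗ[↥(stmt10S k)] (stmt10B k × stmt10B k) :=
  TensorProduct.lift (TensorProduct.lift (invI k))

lemma invT_tmul (k : Type) [Field k] (f r g : stmt10R k) :
    invT k ((f ⊗ₜ[↥(stmt10S k)] r) ⊗ₜ[↥(stmt10S k)] g)
      = (((Am k r) • f) ⊗ₜ[↥(stmt10S k)] g, ((Bm k r) • f) ⊗ₜ[↥(stmt10S k)] g) := rfl

lemma Am_one (k : Type) [Field k] (hchar : (2:k) ≠ 0) : Am k (1 : stmt10R k) = 1 :=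
  Subtype.ext (aval_one k hchar)
lemma Bm_one (k : Type) [Field k] : Bm k (1 : stmt10R k) = 0 :=
  Subtype.ext (bval_one k)
lemma Am_delta (k : Type) [Field k] : Am k (X 1 - X 0 : stmt10R k) = 0 :=
  Subtype.ext (aval_delta k)
lemma Bm_delta (k : Type) [Field k] (hchar : (2:k) ≠ 0) : Bm k (X 1 - X 0 : stmt10R k) = 1 :=
  Subtype.ext (bval_delta k hchar)

lemma invT_ins_one (k : Type) [Field k] (hchar : (2:k) ≠ 0) (b : stmt10B k) :
    invT k (ins k 1 b) = (b, 0) := by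
  induction b using TensorProduct.induction_on with
  | zero => simp; rfl
  | tmul f g => rw [ins_tmul, invT_tmul, Am_one k hchar, Bm_one, one_smul, zero_smul, zero_tmul]
  | add u v hu hv => rw [map_add, map_add, hu, hv]; simp

lemma invT_ins_delta (k : Type) [Field k] (hchar : (2:k) ≠ 0) (b : stmt10B k) :
    invT k (ins k (X 1 - X 0) b) = (0, b) := by
  induction b using TensorProduct.induction_on with
  | zero => simp; rfl
  | tmul f g =>
    rw [ins_tmul, invT_tmul, Am_delta, Bm_delta k hchar, one_smul, zero_smul, zero_tmul]
  | add u v hu hv => rw [map_add, map_add, hu, hv]; simp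

lemma psi_apply (k : Type) [Field k] (m : stmt10B k × stmt10B k) :
    psi k m = ins k 1 m.1 + ins k (X 1 - X 0) m.2 := rfl

lemma left_inv (k : Type) [Field k] (hchar : (2:k) ≠ 0) (m : stmt10B k × stmt10B k) :
    invT k (psi k m) = m := by
  rw [psi_apply, map_add, invT_ins_one k hchar, invT_ins_delta k hchar]
  simp

lemma smul_coe (k : Type) [Field k] (s : ↥(stmt10S k)) (x : stmt10R k) :
    s • x = (s : stmt10R k) * x := rfl

lemma right_inv (k : Type) [Field k] (hchar : (2:k) ≠ 0) (t : stmt10T k) :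
    psi k (invT k t) = t := by
  induction t using TensorProduct.induction_on with
  | zero => simp
  | add u v hu hv => rw [map_add, map_add, hu, hv]
  | tmul u g =>
    induction u using TensorProduct.induction_on with
    | zero => rw [zero_tmul]; simp
    | add u v hu hv => rw [add_tmul, map_add, map_add, hu, hv]
    | tmul f r =>
      rw [invT_tmul, psi_apply]
      simp only [ins_tmul]
      rw [smul_tmul, smul_tmul, smul_coe, smul_coe, mul_one]
      rw [← add_tmul, ← tmul_add]
      show (f ⊗ₜ[↥(stmt10S k)] (aval k r + bval k r * (X 1 - X 0))) ⊗ₜ[↥(stmt10S k)] g = _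
      rw [recon k hchar]

lemma ins_bimod (k : Type) [Field k] (m r r' : stmt10R k) (b : stmt10B k) :
    ins k m ((r ⊗ₜ[↥(stmt10S k)] (1 : stmt10R k)) * b * ((1 : stmt10R k) ⊗ₜ[↥(stmt10S k)] r'))
      = ((r ⊗ₜ[↥(stmt10S k)] (1 : stmt10R k)) ⊗ₜ[↥(stmt10S k)] (1 : stmt10R k))
          * ins k m b
          * (((1 : stmt10R k) ⊗ₜ[↥(stmt10S k)] (1 : stmt10R k)) ⊗ₜ[↥(stmt10S k)] r') := by
  induction b using TensorProduct.induction_on with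
  | zero => simp
  | add u v hu hv => rw [mul_add, add_mul, map_add, hu, hv, map_add, mul_add, add_mul]
  | tmul f g =>
    simp only [Algebra.TensorProduct.tmul_mul_tmul, ins_tmul, one_mul, mul_one]

lemma psi_bimod (k : Type) [Field k] (r r' : stmt10R k) (m : stmt10B k × stmt10B k) :
    psi k ((r ⊗ₜ[↥(stmt10S k)] (1 : stmt10R k)) * m.1 * ((1 : stmt10R k) ⊗ₜ[↥(stmt10S k)] r'),
           (r ⊗ₜ[↥(stmt10S k)] (1 : stmt10R k)) * m.2 * ((1 : stmt10R k) ⊗ₜ[↥(stmt10S k)] r'))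
      = ((r ⊗ₜ[↥(stmt10S k)] (1 : stmt10R k)) ⊗ₜ[↥(stmt10S k)] (1 : stmt10R k))
          * psi k m
          * (((1 : stmt10R k) ⊗ₜ[↥(stmt10S k)] (1 : stmt10R k)) ⊗ₜ[↥(stmt10S k)] r') := by
  rw [psi_apply, psi_apply]
  simp only [ins_bimod]
  rw [mul_add, add_mul]

/-- over a field of characteristic `≠ 2`, the map
`ψ : B ⊕ B → R ⊗_{R^{S₂}} R ⊗_{R^{S₂}} R`, `ψ(f⊗g, h⊗l) = f⊗1⊗g + h⊗(y−x)⊗l`, is a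
well-defined isomorphism of `(R,R)`-bimodules, where `R` acts on the left via the first
tensor factor and on the right via the last one.  In particular `B ⊗_R B ≅ B ⊕ B`. -/
theorem stmt_10 (k : Type) [Field k] (hchar : (2 : k) ≠ 0) :
    ∃ ψ : (stmt10B k × stmt10B k) →ₗ[k] stmt10T k,
      (∀ f g h l : stmt10R k,
        ψ (f ⊗ₜ[↥(stmt10S k)] g, h ⊗ₜ[↥(stmt10S k)] l)
          = (f ⊗ₜ[↥(stmt10S k)] (1 : stmt10R k)) ⊗ₜ[↥(stmt10S k)] g
            + (h ⊗ₜ[↥(stmt10S k)] (X 1 - X 0 : stmt10R k)) ⊗ₜ[↥(stmt10S k)] l) ∧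
      Function.Bijective ψ ∧
      (∀ (r r' : stmt10R k) (m : stmt10B k × stmt10B k),
        ψ ((r ⊗ₜ[↥(stmt10S k)] (1 : stmt10R k)) * m.1
              * ((1 : stmt10R k) ⊗ₜ[↥(stmt10S k)] r'),
           (r ⊗ₜ[↥(stmt10S k)] (1 : stmt10R k)) * m.2
              * ((1 : stmt10R k) ⊗ₜ[↥(stmt10S k)] r'))
          = ((r ⊗ₜ[↥(stmt10S k)] (1 : stmt10R k)) ⊗ₜ[↥(stmt10S k)] (1 : stmt10R k))
              * ψ m
              * (((1 : stmt10R k) ⊗ₜ[↥(stmt10S k)] (1 : stmt10R k))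
                  ⊗ₜ[↥(stmt10S k)] r')) := by
  refine ⟨psi k, ?_, ?_, psi_bimod k⟩
  · intro f g h l
    rw [psi_apply]
    simp [ins_tmul]
  · exact ⟨Function.LeftInverse.injective (left_inv k hchar),
      Function.RightInverse.surjective (right_inv k hchar)⟩
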